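/- arXiv:2002.08949 — 4 statements merged into one kernel-verified Lean document; each statement's English description precedes it below -/
import Mathlib

section
/- Let d, n be natural numbers with n > d ≥ 1, and let b₁, …, bₙ be i.i.d. random vectors in ℝᵈ whose common law is absolutely continuous with respect to d-dimensional Lebesgue measure. Then with probability 1 the following holds: every probability vector p ∈ ℝⁿ (i.e. pᵢ ≥ 0 for all i and Σᵢ pᵢ = 1) that satisfies the constraint Σᵢ pᵢ bᵢ = 0 and minimizes the objective Σᵢ pᵢ ‖bᵢ‖² over all probability vectors satisfying this constraint, has at most d + 1 nonzero entries. -/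
open MeasureTheory Finset
open RealInnerProductSpace Module


lemma quad_null {d : ℕ} (hd : 1 ≤ d) (a : EuclideanSpace ℝ (Fin d) →ₗ[ℝ] ℝ) (β γ : ℝ)
    (hne : ¬(a = 0 ∧ β = 0 ∧ γ = 0)) :
    volume {x : EuclideanSpace ℝ (Fin d) | a x + β * ‖x‖ ^ 2 + γ = 0} = 0 := by
  haveI : Nontrivial (EuclideanSpace ℝ (Fin d)) :=
    Module.nontrivial_of_finrank_pos (R := ℝ) (by rw [finrank_euclideanSpace_fin]; omega)
  by_cases hβ : β = 0
  · by_cases ha : a = 0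
    · have hγ : γ ≠ 0 := fun h => hne ⟨ha, hβ, h⟩
      have : {x : EuclideanSpace ℝ (Fin d) | a x + β * ‖x‖ ^ 2 + γ = 0} = ∅ := by
        ext x; simp [ha, hβ, hγ]
      rw [this]; exact measure_empty
    · obtain ⟨x₁, hx₁⟩ : ∃ x, a x ≠ 0 := by
        by_contra h; push_neg at h; exact ha (LinearMap.ext fun x => h x)
      set x₀ : EuclideanSpace ℝ (Fin d) := (-γ / a x₁) • x₁ with hx₀def
      have hx₀ : a x₀ = -γ := by
        rw [hx₀def, LinearMap.map_smul, smul_eq_mul]; field_simp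
      have hset : {x : EuclideanSpace ℝ (Fin d) | a x + β * ‖x‖ ^ 2 + γ = 0}
          = (fun y => y + (-x₀)) ⁻¹' (LinearMap.ker a : Set (EuclideanSpace ℝ (Fin d))) := by
        ext x
        simp only [hβ, Set.mem_setOf_eq, Set.mem_preimage, SetLike.mem_coe,
          LinearMap.mem_ker, map_add, map_neg, hx₀]
        constructor <;> intro h <;> linarith
      rw [hset, measure_preimage_add_right]
      exact Measure.addHaar_submodule volume _ (by simpa [LinearMap.ker_eq_top] using ha)
  · set w : EuclideanSpace ℝ (Fin d) :=
      (InnerProductSpace.toDual ℝ (EuclideanSpace ℝ (Fin d))).symm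
        (LinearMap.toContinuousLinearMap a) with hwdef
    have hw : ∀ x, ⟪w, x⟫ = a x := fun x => by
      rw [hwdef, InnerProductSpace.toDual_symm_apply]
      simp
    set c : EuclideanSpace ℝ (Fin d) := (-(2 * β)⁻¹) • w with hcdef
    set R : ℝ := ‖c‖ ^ 2 - γ / β with hRdef
    refine measure_mono_null (fun x hx => ?_) (Measure.addHaar_sphere volume c (Real.sqrt R))
    have hx' : a x + β * ‖x‖ ^ 2 + γ = 0 := hx
    have hxc : ⟪x, c⟫ = -(2 * β)⁻¹ * a x := by
      rw [real_inner_comm, hcdef, real_inner_smul_left, hw]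
    have h1 : ‖x - c‖ ^ 2 = R := by
      rw [norm_sub_sq_real, hxc, hRdef]
      have hax : a x = -(β * ‖x‖ ^ 2) - γ := by linarith
      rw [hax]; field_simp; ring
    have h2 : ‖x - c‖ = Real.sqrt R := by
      rw [← h1, Real.sqrt_sq (norm_nonneg _)]
    simpa [Metric.mem_sphere, dist_eq_norm] using h2



open Module in
lemma ae_linIndep {d : ℕ} (hd : 1 ≤ d) (μ : Measure (EuclideanSpace ℝ (Fin d)))
    [IsProbabilityMeasure μ] (habs : μ ≪ volume) :
    ∀ k, k ≤ d + 2 →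
      ∀ᵐ x ∂(Measure.pi fun _ : Fin k => μ),
        LinearIndependent ℝ
          (fun j : Fin k => ((x j, ‖x j‖ ^ 2, 1) : EuclideanSpace ℝ (Fin d) × ℝ × ℝ)) := by
  intro k
  induction k with
  | zero => exact fun _ => ae_of_all _ fun x => linearIndependent_empty_type
  | succ k ih =>
    intro hk
    have ihh := ih (by omega)
    set E := EuclideanSpace ℝ (Fin d) with hE
    set C : Set ((Fin k → E) × E) :=
      (fun q : (Fin k → E) × E =>
        (fun j : Fin (k+1) => ((Fin.cons q.2 q.1 : Fin (k+1) → E) j, ‖(Fin.cons q.2 q.1 : Fin (k+1) → E) j‖ ^ 2, (1:ℝ))))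
        ⁻¹' {f : Fin (k+1) → E × ℝ × ℝ | LinearIndependent ℝ f}ᶜ with hC
    have hcont : Continuous fun q : (Fin k → E) × E =>
        (fun j : Fin (k+1) => ((Fin.cons q.2 q.1 : Fin (k+1) → E) j, ‖(Fin.cons q.2 q.1 : Fin (k+1) → E) j‖ ^ 2, (1:ℝ))) := by
      refine continuous_pi fun j => ?_
      have hcj : Continuous fun q : (Fin k → E) × E => (Fin.cons q.2 q.1 : Fin (k+1) → E) j := by
        refine Fin.cases ?_ ?_ j
        · simpa using continuous_snd
        · intro i; simp only [Fin.cons_succ]; exact (continuous_apply i).comp continuous_fst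
      exact hcj.prodMk ((hcj.norm.pow 2).prodMk continuous_const)
    have hCmeas : MeasurableSet C :=
      ((isOpen_setOf_linearIndependent.isClosed_compl).preimage hcont).measurableSet
    have mp1 := measurePreserving_piFinSuccAbove (fun _ : Fin (k+1) => μ) 0
    have mp := Measure.measurePreserving_swap.comp mp1
    rw [ae_iff]
    have hx : ∀ x : Fin (k+1) → E,
        (Fin.cons (x 0) (fun j => x ((0 : Fin (k+1)).succAbove j)) : ∀ _ : Fin (k+1), E) = x := by
      intro x
      have h2 : (fun j : Fin k => x ((0 : Fin (k+1)).succAbove j)) = (fun j => x j.succ) := by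
        funext j; rw [Fin.succAbove_zero]
      rw [h2]; exact Fin.cons_self_tail x
    have hpre : {x : Fin (k+1) → E |
        ¬ LinearIndependent ℝ (fun j => ((x j, ‖x j‖ ^ 2, 1) : E × ℝ × ℝ))}
        = (Prod.swap ∘ (MeasurableEquiv.piFinSuccAbove (fun _ : Fin (k+1) => E) 0)) ⁻¹' C := by
      ext x
      simp only [Set.mem_setOf_eq, Set.mem_preimage, Function.comp_apply, hC,
        Set.mem_compl_iff]
      rw [show Prod.swap ((MeasurableEquiv.piFinSuccAbove (fun _ : Fin (k+1) => E) 0) x)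
          = ((fun j => x ((0 : Fin (k+1)).succAbove j)), x 0) from rfl]
      rw [show (((fun j => x ((0 : Fin (k+1)).succAbove j)), x 0) : (Fin k → E) × E).2 = x 0 from rfl]
      rw [show (((fun j => x ((0 : Fin (k+1)).succAbove j)), x 0) : (Fin k → E) × E).1
          = (fun j => x ((0 : Fin (k+1)).succAbove j)) from rfl]
      rw [hx x]
    rw [hpre, mp.measure_preimage hCmeas.nullMeasurableSet, Measure.measure_prod_null hCmeas]
    filter_upwards [ihh] with xs hxs
    simp only [Pi.zero_apply]
    set W := Submodule.span ℝ
      (Set.range fun j : Fin k => ((xs j, ‖xs j‖ ^ 2, 1) : E × ℝ × ℝ)) with hW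
    have hWlt : W < ⊤ := by
      rw [lt_top_iff_ne_top]
      intro hWtop
      have h1 : finrank ℝ W ≤ k := by
        exact (finrank_range_le_card (R := ℝ)
          (fun j : Fin k => ((xs j, ‖xs j‖ ^ 2, 1) : E × ℝ × ℝ))).trans_eq (Fintype.card_fin k)
      have h2 : finrank ℝ (E × ℝ × ℝ) = d + 2 := by
        rw [Module.finrank_prod, Module.finrank_prod, finrank_euclideanSpace_fin,
          Module.finrank_self]
      rw [hWtop, finrank_top, h2] at h1
      omega
    obtain ⟨φ, hφne, hφbot⟩ := W.exists_dual_map_eq_bot_of_lt_top hWlt inferInstance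
    have hφW : ∀ y ∈ W, φ y = 0 := fun y hy => by
      have hmem : φ y ∈ W.map φ := Submodule.mem_map_of_mem hy
      rwa [hφbot, Submodule.mem_bot] at hmem
    set a : E →ₗ[ℝ] ℝ := φ.comp (LinearMap.inl ℝ E (ℝ × ℝ)) with hadef
    set β : ℝ := φ (0, 1, 0) with hβdef
    set γ : ℝ := φ (0, 0, 1) with hγdef
    have hdecomp : ∀ (x : E) (s t : ℝ), φ (x, s, t) = a x + β * s + γ * t := by
      intro x s t
      have hxst : ((x, s, t) : E × ℝ × ℝ)
          = (x, 0, 0) + s • ((0 : E), (1:ℝ), (0:ℝ)) + t • ((0 : E), (0:ℝ), (1:ℝ)) := by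
        simp [Prod.ext_iff]
      rw [hxst, map_add, map_add, φ.map_smul, φ.map_smul, smul_eq_mul, smul_eq_mul]
      have ha : φ (x, 0, 0) = a x := by simp [hadef]; rfl
      rw [ha, ← hβdef, ← hγdef]; ring
    have hnetriv : ¬(a = 0 ∧ β = 0 ∧ γ = 0) := by
      rintro ⟨h1, h2, h3⟩
      refine hφne (LinearMap.ext fun y => ?_)
      obtain ⟨y1, y2, y3⟩ := y
      simpa [h1, h2, h3] using hdecomp y1 y2 y3
    refine measure_mono_null ?_ (habs (quad_null hd a β γ hnetriv))
    intro x₀ hx₀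
    have hfam : (fun j : Fin (k+1) =>
          ((Fin.cons x₀ xs : Fin (k+1) → E) j, ‖(Fin.cons x₀ xs : Fin (k+1) → E) j‖ ^ 2, (1:ℝ)))
        = Fin.cons ((x₀, ‖x₀‖ ^ 2, 1) : E × ℝ × ℝ)
            (fun j => ((xs j, ‖xs j‖ ^ 2, 1) : E × ℝ × ℝ)) := by
      funext j; refine Fin.cases ?_ (fun i => ?_) j <;> simp
    have hmem : ((x₀, ‖x₀‖ ^ 2, (1:ℝ)) : E × ℝ × ℝ) ∈ W := by
      by_contra hmemn
      apply hx₀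
      show LinearIndependent ℝ (fun j : Fin (k+1) =>
        (((Fin.cons x₀ xs : Fin (k+1) → E) j : E),
          ‖(Fin.cons x₀ xs : Fin (k+1) → E) j‖ ^ 2, (1:ℝ)))
      rw [hfam]
      exact linearIndependent_fin_cons.mpr ⟨hxs, hmemn⟩
    have hzero := hφW _ hmem
    rw [hdecomp] at hzero
    show a x₀ + β * ‖x₀‖ ^ 2 + γ = 0
    linarith


lemma law_pi {Ω β : Type*} [MeasurableSpace Ω] [MeasurableSpace β] (ℙ : Measure Ω)
    [IsProbabilityMeasure ℙ] {n : ℕ} (b : Fin n → Ω → β) (hmeas : ∀ i, Measurable (b i))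
    (hindep : ProbabilityTheory.iIndepFun b ℙ)
    (μ : Measure β) [IsProbabilityMeasure μ] (hident : ∀ i, Measure.map (b i) ℙ = μ)
    {m : ℕ} (g : Fin m → Fin n) (hg : Function.Injective g) :
    Measure.map (fun ω (j : Fin m) => b (g j) ω) ℙ = Measure.pi (fun _ => μ) := by
  refine (Measure.pi_eq fun s hs => ?_).symm
  have htuple : Measurable fun ω (j : Fin m) => b (g j) ω :=
    measurable_pi_lambda _ fun j => hmeas (g j)
  rw [Measure.map_apply htuple (MeasurableSet.univ_pi hs)]
  have hpre : (fun ω (j : Fin m) => b (g j) ω) ⁻¹' (Set.univ.pi s)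
      = ⋂ j : Fin m, b (g j) ⁻¹' s j := by
    ext ω; simp [Set.mem_pi]
  classical
  set sets : Fin n → Set β := fun i => ⋂ j, ⋂ (_ : g j = i), s j with hsets
  have hsets_meas : ∀ i, MeasurableSet (sets i) := fun i =>
    MeasurableSet.iInter fun j => MeasurableSet.iInter fun _ => hs j
  have hseteq : ⋂ i ∈ Finset.image g Finset.univ, b i ⁻¹' sets i
      = ⋂ j : Fin m, b (g j) ⁻¹' s j := by
    ext ω
    simp only [Set.mem_iInter, Set.mem_preimage, Finset.mem_image, Finset.mem_univ, true_and,
      hsets]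
    constructor
    · intro h j
      exact h (g j) ⟨j, rfl⟩ j rfl
    · rintro h i ⟨j, rfl⟩ j' hj'
      exact hj' ▸ h j'
  have hgj : ∀ j, sets (g j) = s j := by
    intro j
    rw [hsets]
    ext x
    simp only [Set.mem_iInter]
    constructor
    · intro h; exact h j rfl
    · intro h j' e
      cases hg e
      exact h
  have hind := hindep.measure_inter_preimage_eq_mul (Finset.image g Finset.univ)
    (sets := sets) (fun i _ => hsets_meas i)
  rw [hpre, ← hseteq, hind, Finset.prod_image (fun j _ j' _ e => hg e)]
  refine Finset.prod_congr rfl fun j _ => ?_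
  rw [hgj j, ← hident (g j), Measure.map_apply (hmeas (g j)) (hs j)]


set_option maxHeartbeats 1600000 in
lemma det_part {d n : ℕ} (x : Fin n → EuclideanSpace ℝ (Fin d))
    (hgen : ∀ g : Fin (d + 2) → Fin n, Function.Injective g →
      LinearIndependent ℝ (fun j : Fin (d + 2) =>
        ((x (g j), ‖x (g j)‖ ^ 2, 1) : EuclideanSpace ℝ (Fin d) × ℝ × ℝ)))
    (p : Fin n → ℝ) (hp0 : ∀ i, 0 ≤ p i) (hp1 : ∑ i, p i = 1)
    (hpb : ∑ i, p i • x i = 0)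
    (hmin : ∀ q : Fin n → ℝ, (∀ i, 0 ≤ q i) → (∑ i, q i = 1) → (∑ i, q i • x i = 0) →
      ∑ i, p i * ‖x i‖ ^ 2 ≤ ∑ i, q i * ‖x i‖ ^ 2) :
    (univ.filter fun i => p i ≠ 0).card ≤ d + 1 := by
  classical
  by_contra hcard
  push_neg at hcard
  obtain ⟨T, hTsub, hTcard⟩ :=
    Finset.exists_subset_card_eq (s := univ.filter fun i => p i ≠ 0) (n := d + 2) (by omega)
  set g : Fin (d + 2) → Fin n := fun j => T.orderEmbOfFin hTcard j with hgdef
  have hginj : Function.Injective g := (T.orderEmbOfFin hTcard).injective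
  have hpos : ∀ j, 0 < p (g j) := by
    intro j
    have hmem : g j ∈ T := T.orderEmbOfFin_mem hTcard j
    have := hTsub hmem
    rw [Finset.mem_filter] at this
    exact lt_of_le_of_ne (hp0 _) (Ne.symm this.2)
  -- a nonzero kernel element
  set Φ : (Fin (d + 2) → ℝ) →ₗ[ℝ] (EuclideanSpace ℝ (Fin d)) × ℝ :=
    { toFun := fun v => (∑ j, v j • x (g j), ∑ j, v j)
      map_add' := by
        intro v w
        simp [add_smul, Finset.sum_add_distrib, Prod.ext_iff]
      map_smul' := by
        intro c v
        simp [mul_smul, Prod.ext_iff, Finset.smul_sum, Finset.mul_sum] } with hΦdef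
  have hΦnotinj : ¬ Function.Injective Φ := by
    intro hinj
    have h1 := LinearMap.finrank_le_finrank_of_injective hinj
    rw [Module.finrank_pi, Module.finrank_prod, finrank_euclideanSpace_fin,
      Module.finrank_self] at h1
    simp at h1
  rw [← LinearMap.ker_eq_bot] at hΦnotinj
  obtain ⟨v, hvker, hvne⟩ := Submodule.ne_bot_iff _ |>.mp hΦnotinj
  have hΦv : Φ v = 0 := hvker
  have hv1 : ∑ j, v j • x (g j) = 0 := congrArg Prod.fst hΦv
  have hv2 : ∑ j, v j = 0 := congrArg Prod.snd hΦv
  have hvobj : (∑ j, v j * ‖x (g j)‖ ^ 2) ≠ 0 := by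
    intro h0
    apply hvne
    have hLI := (hgen g hginj)
    rw [Fintype.linearIndependent_iff] at hLI
    refine funext (hLI v ?_)
    have : (∑ j, v j • ((x (g j), ‖x (g j)‖ ^ 2, 1) : EuclideanSpace ℝ (Fin d) × ℝ × ℝ))
        = (∑ j, v j • x (g j), ∑ j, v j * ‖x (g j)‖ ^ 2, ∑ j, v j) := by
      rw [Prod.ext_iff, Prod.ext_iff]
      simp [Prod.fst_sum, Prod.snd_sum, smul_eq_mul]
    rw [this, hv1, h0, hv2]
    rfl
  -- reduce to the case of strictly negative objective direction
  have key : ∀ w : Fin (d + 2) → ℝ, (∑ j, w j • x (g j) = 0) → (∑ j, w j = 0) →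
      (∑ j, w j * ‖x (g j)‖ ^ 2 < 0) → False := by
    intro w hw1 hw2 hw3
    set u : Fin n → ℝ := fun i => ∑ j, if g j = i then w j else 0 with hudef
    have hsum : ∀ {M : Type} [AddCommGroup M] [Module ℝ M] (z : Fin n → M),
        ∑ i, u i • z i = ∑ j, w j • z (g j) := by
      intro M _ _ z
      calc ∑ i, u i • z i = ∑ i, ∑ j, (if g j = i then w j else 0) • z i := by
            simp [hudef, Finset.sum_smul]
        _ = ∑ j, ∑ i, (if g j = i then w j else 0) • z i := Finset.sum_comm
        _ = ∑ j, w j • z (g j) := by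
            refine Finset.sum_congr rfl fun j _ => ?_
            have hterm : ∀ i, (if g j = i then w j else 0) • z i
                = (if g j = i then w j • z (g j) else 0) := by
              intro i
              by_cases h : g j = i
              · rw [if_pos h, if_pos h, h]
              · rw [if_neg h, if_neg h, zero_smul]
            rw [Finset.sum_congr rfl fun i _ => hterm i, Finset.sum_ite_eq]
            simp
    have husum : ∑ i, u i = 0 := by
      have := hsum (M := ℝ) (fun _ => (1:ℝ))
      simpa [hw2] using this
    have hub : ∑ i, u i • x i = 0 := by rw [hsum, hw1]
    have huobj : ∑ i, u i * ‖x i‖ ^ 2 = ∑ j, w j * ‖x (g j)‖ ^ 2 := by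
      simpa [smul_eq_mul] using hsum (M := ℝ) (fun i => ‖x i‖ ^ 2)
    have hu0 : ∀ i, i ∉ Set.range g → u i = 0 := by
      intro i hi
      rw [hudef]
      refine Finset.sum_eq_zero fun j _ => ?_
      rw [if_neg (fun h => hi ⟨j, h⟩)]
    have hugj : ∀ j, u (g j) = w j := by
      intro j
      have h1 : u (g j) = ∑ j', if j' = j then w j' else 0 := by
        rw [hudef]
        exact Finset.sum_congr rfl fun j' _ => by simp [hginj.eq_iff]
      rw [h1, Finset.sum_ite_eq']
      simp
    -- choose ε
    set ε : ℝ := Finset.univ.inf' ⟨0, Finset.mem_univ 0⟩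
      (fun j => p (g j) / (|w j| + 1)) with hεdef
    have hε : 0 < ε := by
      rw [hεdef]; apply (Finset.lt_inf'_iff _).mpr
      intro j _
      exact div_pos (hpos j) (by positivity)
    have hεle : ∀ j, ε ≤ p (g j) / (|w j| + 1) := fun j =>
      Finset.inf'_le _ (Finset.mem_univ j)
    set q : Fin n → ℝ := fun i => p i + ε * u i with hqdef
    have hq0 : ∀ i, 0 ≤ q i := by
      intro i
      by_cases hi : i ∈ Set.range g
      · obtain ⟨j, rfl⟩ := hi
        rw [hqdef]
        simp only
        rw [hugj j]
        have h1 : ε * (|w j| + 1) ≤ p (g j) := by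
          have h := hεle j
          rw [le_div_iff₀ (by positivity)] at h
          exact h
        have h2 : -(ε * w j) ≤ ε * |w j| := by
          rw [← mul_neg]
          exact mul_le_mul_of_nonneg_left (neg_le_abs _) hε.le
        nlinarith [abs_nonneg (w j), hε]
      · rw [hqdef]; simp only; rw [hu0 i hi]
        simpa using hp0 i
    have hq1 : ∑ i, q i = 1 := by
      rw [hqdef]
      rw [Finset.sum_add_distrib, hp1, ← Finset.mul_sum, husum]
      ring
    have hqb : ∑ i, q i • x i = 0 := by
      rw [hqdef]
      have : ∀ i, (p i + ε * u i) • x i = p i • x i + ε • u i • x i := by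
        intro i; rw [add_smul, mul_smul]
      rw [Finset.sum_congr rfl fun i _ => this i, Finset.sum_add_distrib, hpb,
        ← Finset.smul_sum, hub]
      simp
    have hobj : ∑ i, q i * ‖x i‖ ^ 2
        = ∑ i, p i * ‖x i‖ ^ 2 + ε * ∑ j, w j * ‖x (g j)‖ ^ 2 := by
      rw [hqdef]
      have : ∀ i, (p i + ε * u i) * ‖x i‖ ^ 2 = p i * ‖x i‖ ^ 2 + ε * (u i * ‖x i‖ ^ 2) := by
        intro i; ring
      rw [Finset.sum_congr rfl fun i _ => this i, Finset.sum_add_distrib, ← Finset.mul_sum,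
        huobj]
    have hle := hmin q hq0 hq1 hqb
    have hlt : ε * ∑ j, w j * ‖x (g j)‖ ^ 2 < 0 := mul_neg_of_pos_of_neg hε hw3
    rw [hobj] at hle
    linarith
  rcases hvobj.lt_or_gt with hneg | hpos'
  · exact key v hv1 hv2 hneg
  · refine key (fun j => -v j) ?_ ?_ ?_
    · have h1 : ∑ j, (-v j) • x (g j) = -∑ j, v j • x (g j) := by
        rw [← Finset.sum_neg_distrib]
        exact Finset.sum_congr rfl fun j _ => neg_smul (v j) (x (g j))
      rw [h1, hv1, neg_zero]
    · have h2 : ∑ j, -v j = -∑ j, v j := Finset.sum_neg_distrib _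
      show ∑ j, -v j = 0
      rw [h2, hv2, neg_zero]
    · have h1 : ∑ j, (-v j) * ‖x (g j)‖ ^ 2 = -∑ j, v j * ‖x (g j)‖ ^ 2 := by
        rw [← Finset.sum_neg_distrib]
        exact Finset.sum_congr rfl fun j _ => neg_mul (v j) _
      rw [h1]
      linarith


/-- **Theorem 1 of the paper.** If `b₁, …, bₙ` are i.i.d. random vectors in `ℝᵈ` whose common
law is absolutely continuous w.r.t. Lebesgue measure and `n > d ≥ 1`, then almost surely every
probability vector `p` that is unbiased (`∑ i, pᵢ bᵢ = 0`) and minimizes `∑ i, pᵢ ‖bᵢ‖²` among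
all unbiased probability vectors is sparse, i.e. has at most `d + 1` nonzero entries. -/
theorem optimal_unbiased_weights_are_sparse
    {d n : ℕ} (hd : 1 ≤ d) (hdn : d < n)
    {Ω : Type*} [MeasurableSpace Ω] (ℙ : Measure Ω) [IsProbabilityMeasure ℙ]
    (b : Fin n → Ω → EuclideanSpace ℝ (Fin d))
    (hmeas : ∀ i, Measurable (b i))
    (hindep : ProbabilityTheory.iIndepFun b ℙ)
    (μ : Measure (EuclideanSpace ℝ (Fin d)))
    (hident : ∀ i, Measure.map (b i) ℙ = μ)
    (habs : μ ≪ volume) :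
    ∀ᵐ ω ∂ℙ, ∀ p : Fin n → ℝ,
      (∀ i, 0 ≤ p i) → (∑ i, p i = 1) → (∑ i, p i • b i ω = 0) →
      (∀ q : Fin n → ℝ, (∀ i, 0 ≤ q i) → (∑ i, q i = 1) → (∑ i, q i • b i ω = 0) →
        ∑ i, p i * ‖b i ω‖ ^ 2 ≤ ∑ i, q i * ‖b i ω‖ ^ 2) →
      (univ.filter fun i => p i ≠ 0).card ≤ d + 1 := by
  classical
  haveI : IsProbabilityMeasure μ := by
    have h := Measure.isProbabilityMeasure_map (μ := ℙ)
      (f := b ⟨0, by omega⟩) (hmeas _).aemeasurable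
    rwa [hident] at h
  have hgen : ∀ᵐ ω ∂ℙ, ∀ g : Fin (d + 2) → Fin n, Function.Injective g →
      LinearIndependent ℝ (fun j : Fin (d + 2) =>
        ((b (g j) ω, ‖b (g j) ω‖ ^ 2, 1) : EuclideanSpace ℝ (Fin d) × ℝ × ℝ)) := by
    rw [ae_all_iff]
    intro g
    by_cases hg : Function.Injective g
    · have hlaw := law_pi ℙ b hmeas hindep μ hident g hg
      have hgood := ae_linIndep hd μ habs (d + 2) le_rfl
      rw [← hlaw] at hgood
      have htuple : Measurable fun ω (j : Fin (d + 2)) => b (g j) ω :=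
        measurable_pi_lambda _ fun j => hmeas (g j)
      have hmeasset : MeasurableSet {x : Fin (d + 2) → EuclideanSpace ℝ (Fin d) |
          LinearIndependent ℝ (fun j : Fin (d + 2) =>
            ((x j, ‖x j‖ ^ 2, 1) : EuclideanSpace ℝ (Fin d) × ℝ × ℝ))} := by
        have hcont : Continuous fun x : Fin (d + 2) → EuclideanSpace ℝ (Fin d) =>
            (fun j : Fin (d + 2) =>
              ((x j, ‖x j‖ ^ 2, 1) : EuclideanSpace ℝ (Fin d) × ℝ × ℝ)) := by
          refine continuous_pi fun j => ?_
          exact (continuous_apply j).prodMk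
            (((continuous_apply j).norm.pow 2).prodMk continuous_const)
        exact (isOpen_setOf_linearIndependent.preimage hcont).measurableSet
      have hae := (ae_map_iff htuple.aemeasurable hmeasset).mp hgood
      filter_upwards [hae] with ω h _
      exact h
    · exact ae_of_all _ fun ω h => absurd h hg
  filter_upwards [hgen] with ω hω p hp0 hp1 hpb hmin
  exact det_part (fun i => b i ω) hω p hp0 hp1 hpb hmin
end

section
/- Let n, d ≥ 1, let b₁, …, bₙ be i.i.d. square-integrable random vectors in ℝᵈ, and let p₁, …, pₙ be fixed nonnegative reals with Σᵢ pᵢ = 1. Then 𝔼[Σ_{i<j} ‖bᵢ − bⱼ‖² (pᵢpⱼ − 1/n²)] = 𝔼[‖b₁ − b₂‖²] · (Σ_{i<j} pᵢpⱼ − (n−1)/(2n)) ≤ 0. Moreover, if p is not the uniform vector (pᵢ = 1/n for all i) and 𝔼[‖b₁ − b₂‖²] > 0, the inequality is strict. -/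
open MeasureTheory Finset

lemma key_sum {n : ℕ} (hn : 1 ≤ n) (p : Fin n → ℝ) (hsum : ∑ i, p i = 1) :
    (∑ i, ∑ j ∈ Ioi i, p i * p j) - ((n : ℝ) - 1) / (2 * n) =
      -(1/2) * ∑ i, (p i - 1/n)^2 := by
  have hn0 : (n : ℝ) ≠ 0 := Nat.cast_ne_zero.mpr (by omega)
  have hoff : ∑ i, ∑ j ∈ Ioi i, (p j * p i + p i * p j) = ∑ i, ∑ j ∈ {i}ᶜ, p j * p i := by
    have h := Finset.sum_sum_Ioi_add_eq_sum_sum_off_diag (fun j i : Fin n => p j * p i)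
    convert h using 4
  have hc : ∀ i : Fin n, ∑ j ∈ ({i}ᶜ : Finset (Fin n)), p j * p i = (1 - p i) * p i := by
    intro i
    rw [← Finset.sum_mul]
    congr 1
    have h1 := Fintype.sum_eq_add_sum_compl i p
    rw [hsum] at h1
    linarith
  have h2 : 2 * (∑ i, ∑ j ∈ Ioi i, p i * p j) = 1 - ∑ i, p i ^ 2 := by
    have hl : ∑ i, ∑ j ∈ Ioi i, (p j * p i + p i * p j)
        = 2 * (∑ i, ∑ j ∈ Ioi i, p i * p j) := by
      rw [Finset.mul_sum]
      exact Finset.sum_congr rfl fun i _ => by rw [Finset.mul_sum]; exact Finset.sum_congr rfl fun j _ => by ring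
    rw [hl, Finset.sum_congr rfl fun i _ => hc i] at hoff
    rw [hoff]
    have he : ∑ i : Fin n, (1 - p i) * p i = ∑ i : Fin n, (p i - p i ^ 2) :=
      Finset.sum_congr rfl fun i _ => by ring
    rw [he, Finset.sum_sub_distrib, hsum]
  have h3 : ∑ i, (p i - 1/n)^2 = (∑ i, p i ^ 2) - 1/n := by
    have : ∀ i : Fin n, (p i - 1/n)^2 = p i ^ 2 - (2/n) * p i + 1/n^2 := fun i => by ring
    rw [Finset.sum_congr rfl fun i _ => this i]
    rw [Finset.sum_add_distrib, Finset.sum_sub_distrib, ← Finset.mul_sum, hsum,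
      Finset.sum_const, Finset.card_univ, Fintype.card_fin, nsmul_eq_mul]
    field_simp
    ring
  have hS : ∑ i, ∑ j ∈ Ioi i, p i * p j = (1 - ∑ i, p i ^ 2) / 2 := by linarith
  rw [hS, h3]
  field_simp
  ring

/-- **𝔼[Δ] ≤ 0 part of Theorem 2.** For i.i.d. square-integrable random vectors
`b₁, …, bₙ` in `ℝᵈ` with common law `ν` and fixed probability weights `p`,
`𝔼[∑_{i<j} ‖bᵢ − bⱼ‖² (pᵢpⱼ − 1/n²)] = 𝔼[‖b₁ − b₂‖²] (∑_{i<j} pᵢpⱼ − (n−1)/(2n)) ≤ 0`,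
with strict inequality when `p` is not uniform and `𝔼[‖b₁ − b₂‖²] > 0`.
Here `𝔼[‖b₁ − b₂‖²]` is written as the integral of `‖z₁ − z₂‖²` against `ν × ν`. -/
theorem expected_trace_covariance_nonuniform_le_uniform
    {n d : ℕ} (hn : 1 ≤ n) (hd : 1 ≤ d)
    {Ω : Type*} [MeasurableSpace Ω] (ℙ : Measure Ω) [IsProbabilityMeasure ℙ]
    (b : Fin n → Ω → EuclideanSpace ℝ (Fin d))
    (hmeas : ∀ i, Measurable (b i))
    (hindep : ProbabilityTheory.iIndepFun b ℙ)
    (ν : Measure (EuclideanSpace ℝ (Fin d))) [IsProbabilityMeasure ν]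
    (hident : ∀ i, Measure.map (b i) ℙ = ν)
    (hL2 : ∀ i, MemLp (b i) 2 ℙ)
    (p : Fin n → ℝ) (hp : ∀ i, 0 ≤ p i) (hsum : ∑ i, p i = 1) :
    (∫ ω, (∑ i, ∑ j ∈ Ioi i, ‖b i ω - b j ω‖ ^ 2 * (p i * p j - 1 / (n : ℝ) ^ 2)) ∂ℙ =
        (∫ z, ‖z.1 - z.2‖ ^ 2 ∂(ν.prod ν)) *
          ((∑ i, ∑ j ∈ Ioi i, p i * p j) - ((n : ℝ) - 1) / (2 * n))) ∧
    (∫ ω, (∑ i, ∑ j ∈ Ioi i, ‖b i ω - b j ω‖ ^ 2 * (p i * p j - 1 / (n : ℝ) ^ 2)) ∂ℙ ≤ 0) ∧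
    ((¬ ∀ i, p i = 1 / n) → 0 < ∫ z, ‖z.1 - z.2‖ ^ 2 ∂(ν.prod ν) →
      ∫ ω, (∑ i, ∑ j ∈ Ioi i, ‖b i ω - b j ω‖ ^ 2 * (p i * p j - 1 / (n : ℝ) ^ 2)) ∂ℙ < 0) := by
  have hn0 : (n : ℝ) ≠ 0 := Nat.cast_ne_zero.mpr (by omega)
  set M := ∫ z, ‖z.1 - z.2‖ ^ 2 ∂(ν.prod ν) with hMdef
  have hint : ∀ i j, Integrable (fun ω => ‖b i ω - b j ω‖ ^ 2) ℙ := by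
    intro i j
    have h2 : MemLp (fun ω => b i ω - b j ω) 2 ℙ := (hL2 i).sub (hL2 j)
    exact (memLp_two_iff_integrable_sq_norm h2.aestronglyMeasurable).mp h2
  have hpair : ∀ i j : Fin n, i ≠ j → ∫ ω, ‖b i ω - b j ω‖ ^ 2 ∂ℙ = M := by
    intro i j hij
    have hmap : ℙ.map (fun ω => (b i ω, b j ω)) = ν.prod ν := by
      rw [(ProbabilityTheory.indepFun_iff_map_prod_eq_prod_map_map
        (hmeas i).aemeasurable (hmeas j).aemeasurable).mp (hindep.indepFun hij),
        hident i, hident j]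
    have hcont : Continuous fun z : EuclideanSpace ℝ (Fin d) × EuclideanSpace ℝ (Fin d) =>
        ‖z.1 - z.2‖ ^ 2 := by fun_prop
    rw [hMdef, ← hmap,
      integral_map ((hmeas i).prodMk (hmeas j)).aemeasurable hcont.aestronglyMeasurable]
  have h1 : ∫ ω, (∑ i, ∑ j ∈ Ioi i, ‖b i ω - b j ω‖ ^ 2 * (p i * p j - 1 / (n : ℝ) ^ 2)) ∂ℙ
      = ∑ i, ∑ j ∈ Ioi i, M * (p i * p j - 1 / (n : ℝ) ^ 2) := by
    rw [integral_finset_sum _ (fun i _ =>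
      integrable_finset_sum _ fun j _ => (hint i j).mul_const _)]
    refine Finset.sum_congr rfl fun i _ => ?_
    rw [integral_finset_sum _ (fun j _ => (hint i j).mul_const _)]
    refine Finset.sum_congr rfl fun j hj => ?_
    rw [integral_mul_const, hpair i j (Finset.mem_Ioi.mp hj).ne]
  have huni : (∑ i : Fin n, ∑ j ∈ Ioi i, (1:ℝ) / (n:ℝ) ^ 2) = ((n:ℝ) - 1) / (2 * n) := by
    have h := key_sum hn (fun _ => 1 / (n:ℝ)) (by
      rw [Finset.sum_const, Finset.card_univ, Fintype.card_fin, nsmul_eq_mul]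
      field_simp)
    simp only [sub_self, ne_eq, OfNat.ofNat_ne_zero, not_false_eq_true, zero_pow,
      Finset.sum_const_zero, mul_zero] at h
    have he : (∑ i : Fin n, ∑ j ∈ Ioi i, 1 / (n:ℝ) * (1 / (n:ℝ)))
        = ∑ i : Fin n, ∑ j ∈ Ioi i, (1:ℝ) / (n:ℝ) ^ 2 := by
      refine Finset.sum_congr rfl fun i _ => Finset.sum_congr rfl fun j _ => by ring
    rw [he] at h
    linarith
  have heq : ∫ ω, (∑ i, ∑ j ∈ Ioi i, ‖b i ω - b j ω‖ ^ 2 * (p i * p j - 1 / (n : ℝ) ^ 2)) ∂ℙ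
      = M * ((∑ i, ∑ j ∈ Ioi i, p i * p j) - ((n : ℝ) - 1) / (2 * n)) := by
    rw [h1, ← huni]
    rw [mul_sub, Finset.mul_sum, Finset.mul_sum, ← Finset.sum_sub_distrib]
    refine Finset.sum_congr rfl fun i _ => ?_
    rw [Finset.mul_sum, Finset.mul_sum, ← Finset.sum_sub_distrib]
    exact Finset.sum_congr rfl fun j _ => by ring
  have hM0 : 0 ≤ M := integral_nonneg fun z => by positivity
  have hkey := key_sum hn p hsum
  have hsq0 : 0 ≤ ∑ i, (p i - 1 / (n:ℝ)) ^ 2 := Finset.sum_nonneg fun i _ => sq_nonneg _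
  refine ⟨heq, ?_, ?_⟩
  · rw [heq, hkey]
    have : -(1/2) * ∑ i, (p i - 1/(n:ℝ))^2 ≤ 0 := by nlinarith
    exact mul_nonpos_iff.mpr (Or.inl ⟨hM0, this⟩)
  · intro hne hMpos
    push_neg at hne
    obtain ⟨i, hi⟩ := hne
    have hpos : 0 < ∑ i, (p i - 1/(n:ℝ))^2 := by
      refine Finset.sum_pos' (fun j _ => sq_nonneg _) ⟨i, Finset.mem_univ i, ?_⟩
      have hne0 : p i - 1/(n:ℝ) ≠ 0 := sub_ne_zero.mpr hi
      exact (sq_nonneg _).lt_of_ne (Ne.symm (pow_ne_zero 2 hne0))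
    rw [heq, hkey]
    exact mul_neg_of_pos_of_neg hMpos (by nlinarith)
end

section
/- Fix d, n ≥ 1, reals R > 0, σ > 0, a vector y ∈ ℝᵈ, and set F = −1/σ². For h > 0 and b = (b₁, …, bₙ) ∈ (ℝᵈ)ⁿ define the unnormalized weights p̃ᵢ(b) = exp(F h [‖y + (1/n)Σⱼ bⱼ‖²/2 − ‖y + bᵢ‖²/2]), the normalized weights pᵢ(b) = p̃ᵢ(b)/Σₖ p̃ₖ(b), and the functional f(b) = Σ_{i<j} ‖bᵢ − bⱼ‖² (pᵢ(b)pⱼ(b) − 1/n²). Then there exists a constant C > 0, depending only on R, ‖y‖ and σ but not on n nor on h, such that for every h ∈ (0, 1], every index i, and all tuples b, b̂ ∈ (ℝᵈ)ⁿ with all components of norm at most R that differ only in the i-th component, one has |f(b) − f(b̂)| ≤ C h. -/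
open Finset

/-- Unnormalized EWSG weight `p̃ᵢ(b) = exp(F h (‖y + (1/n)∑ⱼ bⱼ‖²/2 − ‖y + bᵢ‖²/2))`
with `F = −1/σ²`. -/
noncomputable def ewsgUnnormWeight (σ h : ℝ) {d n : ℕ}
    (y : EuclideanSpace ℝ (Fin d)) (b : Fin n → EuclideanSpace ℝ (Fin d)) (i : Fin n) : ℝ :=
  Real.exp ((-1 / σ ^ 2) * h *
    (‖y + (n : ℝ)⁻¹ • ∑ j, b j‖ ^ 2 / 2 - ‖y + b i‖ ^ 2 / 2))

/-- Normalized EWSG weight `pᵢ(b) = p̃ᵢ(b) / ∑ₖ p̃ₖ(b)`. -/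
noncomputable def ewsgWeight (σ h : ℝ) {d n : ℕ}
    (y : EuclideanSpace ℝ (Fin d)) (b : Fin n → EuclideanSpace ℝ (Fin d)) (i : Fin n) : ℝ :=
  ewsgUnnormWeight σ h y b i / ∑ k, ewsgUnnormWeight σ h y b k

/-- `f(b) = ∑_{i<j} ‖bᵢ − bⱼ‖² (pᵢ(b)pⱼ(b) − 1/n²)`, the difference between the trace of the
covariance of the EWSG-subsampled gradient and that of the uniformly subsampled one. -/
noncomputable def ewsgVarDiff (σ h : ℝ) {d n : ℕ}
    (y : EuclideanSpace ℝ (Fin d)) (b : Fin n → EuclideanSpace ℝ (Fin d)) : ℝ :=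
  ∑ i, ∑ j ∈ Ioi i, ‖b i - b j‖ ^ 2 *
    (ewsgWeight σ h y b i * ewsgWeight σ h y b j - 1 / (n : ℝ) ^ 2)

set_option maxHeartbeats 1000000

/-- Auxiliary: `e^x - 1 ≤ x e^x`. -/
theorem ewsg_exp_sub_one_le_aux (x : ℝ) : Real.exp x - 1 ≤ x * Real.exp x := by
  have h1 := Real.add_one_le_exp (-x)
  have h2 : Real.exp (-x) * Real.exp x = 1 := by rw [← Real.exp_add]; simp
  nlinarith [Real.exp_pos x]

/-- **Bounded-differences estimate for EWSG (proof of Theorem 2).** There is a constant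
`C > 0` depending only on `R`, `‖y‖` and `σ` (not on `n` nor on `h ∈ (0,1]`) such that
changing a single coordinate of `b` (all coordinates bounded by `R`) changes
`f(b) = ewsgVarDiff σ h y b` by at most `C h`. -/
theorem ewsgVarDiff_bounded_differences
    (d : ℕ) (hd : 1 ≤ d) (R σ : ℝ) (hR : 0 < R) (hσ : 0 < σ)
    (y : EuclideanSpace ℝ (Fin d)) :
    ∃ C > 0, ∀ n : ℕ, 1 ≤ n → ∀ h : ℝ, 0 < h → h ≤ 1 → ∀ i : Fin n,
      ∀ b bhat : Fin n → EuclideanSpace ℝ (Fin d),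
        (∀ j, ‖b j‖ ≤ R) → (∀ j, ‖bhat j‖ ≤ R) → (∀ j, j ≠ i → b j = bhat j) →
        |ewsgVarDiff σ h y b - ewsgVarDiff σ h y bhat| ≤ C * h := by
  set A : ℝ := ‖y‖ + R with hAdef
  have hA0 : 0 < A := by positivity
  set M : ℝ := A ^ 2 / σ ^ 2 with hMdef
  have hM0 : 0 < M := by rw [hMdef]; positivity
  set κ : ℝ := 2 * M * Real.exp (2 * M) with hκdef
  have hκ0 : 0 < κ := by rw [hκdef]; exact mul_pos (by linarith) (Real.exp_pos _)
  set K : ℝ := 4 * R ^ 2 * ((Real.exp (2 * M) + 1) * κ) with hKdef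
  have hK0 : 0 < K := by
    rw [hKdef]
    exact mul_pos (by positivity) (mul_pos (by positivity) hκ0)
  refine ⟨2 * K, by linarith, ?_⟩
  intro n hn h hh0 hh1 i b bhat hb hbhat _
  have main : ∀ c : Fin n → EuclideanSpace ℝ (Fin d), (∀ j, ‖c j‖ ≤ R) →
      |ewsgVarDiff σ h y c| ≤ K * h := by
    intro c hc
    have hn0 : (0:ℝ) < (n:ℝ) := by exact_mod_cast Nat.pos_of_ne_zero (by omega)
    have hnne : (n:ℝ) ≠ 0 := ne_of_gt hn0
    -- norm bounds
    have hnorm : ∀ i : Fin n, ‖y + c i‖ ≤ A := fun i => by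
      calc ‖y + c i‖ ≤ ‖y‖ + ‖c i‖ := norm_add_le _ _
        _ ≤ ‖y‖ + R := by linarith [hc i]
    have havg : ‖y + (n:ℝ)⁻¹ • ∑ j, c j‖ ≤ A := by
      have h1 : ‖∑ j, c j‖ ≤ (n:ℝ) * R := by
        calc ‖∑ j, c j‖ ≤ ∑ j, ‖c j‖ := norm_sum_le _ _
          _ ≤ ∑ _j : Fin n, R := Finset.sum_le_sum (fun j _ => hc j)
          _ = (n:ℝ) * R := by simp [mul_comm]
      calc ‖y + (n:ℝ)⁻¹ • ∑ j, c j‖ ≤ ‖y‖ + ‖(n:ℝ)⁻¹ • ∑ j, c j‖ := norm_add_le _ _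
        _ = ‖y‖ + (n:ℝ)⁻¹ * ‖∑ j, c j‖ := by
            rw [norm_smul, Real.norm_eq_abs, abs_of_nonneg (by positivity)]
        _ ≤ ‖y‖ + (n:ℝ)⁻¹ * ((n:ℝ) * R) := by
            have := mul_le_mul_of_nonneg_left h1 (le_of_lt (inv_pos.mpr hn0))
            linarith
        _ ≤ A := by rw [hAdef]; field_simp; exact le_refl _
    -- exponent bound
    have hexp : ∀ i : Fin n,
        |(-1 / σ ^ 2) * h * (‖y + (n:ℝ)⁻¹ • ∑ j, c j‖ ^ 2 / 2 - ‖y + c i‖ ^ 2 / 2)| ≤ h * M := by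
      intro i
      have h1 : (0:ℝ) ≤ ‖y + (n:ℝ)⁻¹ • ∑ j, c j‖ := norm_nonneg _
      have h2 : (0:ℝ) ≤ ‖y + c i‖ := norm_nonneg _
      have h3 : ‖y + (n:ℝ)⁻¹ • ∑ j, c j‖ ^ 2 ≤ A ^ 2 := by nlinarith [havg]
      have h4 : ‖y + c i‖ ^ 2 ≤ A ^ 2 := by nlinarith [hnorm i]
      have h5 : |‖y + (n:ℝ)⁻¹ • ∑ j, c j‖ ^ 2 / 2 - ‖y + c i‖ ^ 2 / 2| ≤ A ^ 2 := by
        rw [abs_le]; constructor <;> nlinarith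
      rw [abs_mul, abs_mul]
      have h6 : |(-1 / σ ^ 2 : ℝ)| = 1 / σ ^ 2 := by
        rw [abs_div, abs_neg, abs_one, abs_of_pos (by positivity : (0:ℝ) < σ ^ 2)]
      rw [h6, abs_of_pos hh0]
      calc 1 / σ ^ 2 * h * |‖y + (n:ℝ)⁻¹ • ∑ j, c j‖ ^ 2 / 2 - ‖y + c i‖ ^ 2 / 2|
          ≤ 1 / σ ^ 2 * h * A ^ 2 := by
            apply mul_le_mul_of_nonneg_left h5 (by positivity)
        _ = h * M := by rw [hMdef]; ring
    -- unnormalized weight bounds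
    have hpt : ∀ i : Fin n, Real.exp (-(h * M)) ≤ ewsgUnnormWeight σ h y c i ∧
        ewsgUnnormWeight σ h y c i ≤ Real.exp (h * M) := by
      intro i
      have := hexp i
      rw [abs_le] at this
      unfold ewsgUnnormWeight
      exact ⟨Real.exp_le_exp.mpr this.1, Real.exp_le_exp.mpr this.2⟩
    set S := ∑ k, ewsgUnnormWeight σ h y c k with hSdef
    have hSlo : (n:ℝ) * Real.exp (-(h * M)) ≤ S := by
      calc (n:ℝ) * Real.exp (-(h * M)) = ∑ _k : Fin n, Real.exp (-(h * M)) := by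
            simp [mul_comm]
        _ ≤ S := Finset.sum_le_sum fun k _ => (hpt k).1
    have hShi : S ≤ (n:ℝ) * Real.exp (h * M) := by
      calc S ≤ ∑ _k : Fin n, Real.exp (h * M) := Finset.sum_le_sum fun k _ => (hpt k).2
        _ = (n:ℝ) * Real.exp (h * M) := by simp [mul_comm]
    have hS0 : 0 < S := lt_of_lt_of_le (by positivity) hSlo
    -- weight bounds
    have hw_nonneg : ∀ i : Fin n, 0 ≤ ewsgWeight σ h y c i := fun i =>
      div_nonneg (Real.exp_nonneg _) hS0.le
    have heq1 : Real.exp (h * M) / ((n:ℝ) * Real.exp (-(h * M)))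
        = Real.exp (2 * (h * M)) / n := by
      rw [Real.exp_neg, show (2 * (h * M)) = h * M + h * M by ring, Real.exp_add]
      field_simp
    have heq2 : Real.exp (-(h * M)) / ((n:ℝ) * Real.exp (h * M))
        = Real.exp (-(2 * (h * M))) / n := by
      rw [show (-(2 * (h * M))) = -(h*M) + -(h*M) by ring, Real.exp_add, Real.exp_neg]
      field_simp
    have hw_hi : ∀ i : Fin n, ewsgWeight σ h y c i ≤ Real.exp (2 * (h * M)) / n := by
      intro i
      rw [ewsgWeight, ← heq1]
      exact div_le_div₀ (Real.exp_nonneg _) (hpt i).2 (by positivity) hSlo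
    have hw_lo : ∀ i : Fin n, Real.exp (-(2 * (h * M))) / n ≤ ewsgWeight σ h y c i := by
      intro i
      rw [ewsgWeight, ← heq2]
      exact div_le_div₀ (Real.exp_nonneg _) (hpt i).1 hS0 hShi
    -- exponential estimates
    have hx0 : 0 ≤ 2 * (h * M) := by positivity
    have e0 : Real.exp (2 * (h * M)) ≤ Real.exp (2 * M) := by
      apply Real.exp_le_exp.mpr
      have := mul_le_of_le_one_left hM0.le hh1
      linarith
    have e1 : Real.exp (2 * (h * M)) - 1 ≤ κ * h := by
      have h1 := ewsg_exp_sub_one_le_aux (2 * (h * M))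
      have h2 : 2 * (h * M) * Real.exp (2 * (h * M)) ≤ 2 * (h * M) * Real.exp (2 * M) :=
        mul_le_mul_of_nonneg_left e0 hx0
      have h3 : 2 * (h * M) * Real.exp (2 * M) = κ * h := by rw [hκdef]; ring
      linarith
    have e2 : 1 - Real.exp (-(2 * (h * M))) ≤ κ * h := by
      have h1 := Real.add_one_le_exp (2 * (h * M))
      have h2 := Real.add_one_le_exp (-(2 * (h * M)))
      linarith
    -- deviation bound
    have hdev : ∀ i : Fin n, |ewsgWeight σ h y c i - 1 / n| ≤ κ * h / n := by
      intro i
      rw [abs_le]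
      constructor
      · have h1 : (-(κ * h)) / n ≤ (Real.exp (-(2 * (h * M))) - 1) / n :=
          (div_le_div_iff_of_pos_right hn0).mpr (by linarith)
        have h2 := hw_lo i
        have h3 : (Real.exp (-(2 * (h * M))) - 1) / n
            = Real.exp (-(2 * (h * M))) / n - 1 / n := by ring
        have h4 : (-(κ * h)) / n = -(κ * h / n) := by ring
        linarith
      · have h1 : (Real.exp (2 * (h * M)) - 1) / n ≤ κ * h / n :=
          (div_le_div_iff_of_pos_right hn0).mpr (by linarith)
        have h2 := hw_hi i
        have h3 : (Real.exp (2 * (h * M)) - 1) / n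
            = Real.exp (2 * (h * M)) / n - 1 / n := by ring
        linarith
    -- product bound
    have hw_hi2 : ∀ i : Fin n, ewsgWeight σ h y c i ≤ Real.exp (2 * M) / n := fun i =>
      le_trans (hw_hi i) ((div_le_div_iff_of_pos_right hn0).mpr e0)
    have hprod : ∀ i j : Fin n,
        |ewsgWeight σ h y c i * ewsgWeight σ h y c j - 1 / (n:ℝ) ^ 2|
          ≤ (Real.exp (2 * M) + 1) * κ * h / (n:ℝ) ^ 2 := by
      intro i j
      have hid : ewsgWeight σ h y c i * ewsgWeight σ h y c j - 1 / (n:ℝ) ^ 2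
          = ewsgWeight σ h y c i * (ewsgWeight σ h y c j - 1 / n)
            + (1 / n) * (ewsgWeight σ h y c i - 1 / n) := by
        field_simp
        ring
      rw [hid]
      calc |ewsgWeight σ h y c i * (ewsgWeight σ h y c j - 1 / n)
            + (1 / n) * (ewsgWeight σ h y c i - 1 / n)|
          ≤ |ewsgWeight σ h y c i * (ewsgWeight σ h y c j - 1 / n)|
            + |(1 / n) * (ewsgWeight σ h y c i - 1 / n)| := abs_add_le _ _
        _ = ewsgWeight σ h y c i * |ewsgWeight σ h y c j - 1 / n|
            + (1 / n) * |ewsgWeight σ h y c i - 1 / n| := by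
            rw [abs_mul, abs_mul, abs_of_nonneg (hw_nonneg i),
              abs_of_nonneg (by positivity : (0:ℝ) ≤ 1 / (n:ℝ))]
        _ ≤ (Real.exp (2 * M) / n) * (κ * h / n) + (1 / n) * (κ * h / n) := by
            apply add_le_add
            · exact mul_le_mul (hw_hi2 i) (hdev j) (abs_nonneg _) (by positivity)
            · exact mul_le_mul_of_nonneg_left (hdev i) (by positivity)
        _ = (Real.exp (2 * M) + 1) * κ * h / (n:ℝ) ^ 2 := by
            field_simp
    -- norm-squared bound
    have hnsq : ∀ i j : Fin n, ‖c i - c j‖ ^ 2 ≤ 4 * R ^ 2 := by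
      intro i j
      have h1 : ‖c i - c j‖ ≤ 2 * R := by
        calc ‖c i - c j‖ ≤ ‖c i‖ + ‖c j‖ := norm_sub_le _ _
          _ ≤ 2 * R := by linarith [hc i, hc j]
      nlinarith [norm_nonneg (c i - c j)]
    -- assemble
    have hcard : ∀ i : Fin n, ((Ioi i).card : ℝ) ≤ (n:ℝ) := by
      intro i
      have := Finset.card_le_univ (Ioi i)
      have h2 : ((Ioi i).card : ℝ) ≤ (Fintype.card (Fin n) : ℝ) := by exact_mod_cast this
      simpa using h2
    rw [ewsgVarDiff]
    calc |∑ i, ∑ j ∈ Ioi i, ‖c i - c j‖ ^ 2 *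
          (ewsgWeight σ h y c i * ewsgWeight σ h y c j - 1 / (n : ℝ) ^ 2)|
        ≤ ∑ i, |∑ j ∈ Ioi i, ‖c i - c j‖ ^ 2 *
          (ewsgWeight σ h y c i * ewsgWeight σ h y c j - 1 / (n : ℝ) ^ 2)| :=
          Finset.abs_sum_le_sum_abs _ _
      _ ≤ ∑ i, ∑ j ∈ Ioi i, |‖c i - c j‖ ^ 2 *
          (ewsgWeight σ h y c i * ewsgWeight σ h y c j - 1 / (n : ℝ) ^ 2)| :=
          Finset.sum_le_sum fun i _ => Finset.abs_sum_le_sum_abs _ _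
      _ ≤ ∑ i : Fin n, ∑ j ∈ Ioi i,
          (4 * R ^ 2) * ((Real.exp (2 * M) + 1) * κ * h / (n:ℝ) ^ 2) := by
          apply Finset.sum_le_sum
          intro i _
          apply Finset.sum_le_sum
          intro j _
          rw [abs_mul, abs_of_nonneg (by positivity : (0:ℝ) ≤ ‖c i - c j‖ ^ 2)]
          exact mul_le_mul (hnsq i j) (hprod i j) (abs_nonneg _) (by positivity)
      _ = ∑ i : Fin n, ((Ioi i).card : ℝ) *
          ((4 * R ^ 2) * ((Real.exp (2 * M) + 1) * κ * h / (n:ℝ) ^ 2)) := by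
          simp [Finset.sum_const, nsmul_eq_mul]
      _ ≤ ∑ _i : Fin n, (n:ℝ) *
          ((4 * R ^ 2) * ((Real.exp (2 * M) + 1) * κ * h / (n:ℝ) ^ 2)) := by
          apply Finset.sum_le_sum
          intro i _
          exact mul_le_mul_of_nonneg_right (hcard i) (by positivity)
      _ = (n:ℝ) * ((n:ℝ) * ((4 * R ^ 2) * ((Real.exp (2 * M) + 1) * κ * h / (n:ℝ) ^ 2))) := by
          rw [Finset.sum_const]
          simp [nsmul_eq_mul]
      _ = K * h := by
          rw [hKdef]
          field_simp
  calc |ewsgVarDiff σ h y b - ewsgVarDiff σ h y bhat|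
      ≤ |ewsgVarDiff σ h y b| + |ewsgVarDiff σ h y bhat| := abs_sub _ _
    _ ≤ K * h + K * h := add_le_add (main b hb) (main bhat hbhat)
    _ = 2 * K * h := by ring
end

section
/- Let 0 < γ < 2, let A = [[0, 1], [−1, −γ]], let p ≥ 1 be a natural number and C₀ > 0 a constant. Then there exist h₀ > 0 and Ĉ > 0 such that for every step size h ∈ (0, h₀), the following holds. Let (e_k)_{k≥0} be any sequence in ℝ² with ‖e_k‖ ≤ C₀ h^p for all k, and define x_{k+1} = (I + hA) x_k + h e_k and x'_k = (I + hA)^k x₀ with x₀ = x'₀ ∈ ℝ². Then: (i) ‖x'_k‖ → 0 as k → ∞ (indeed ‖x'_k‖ converges to 0 geometrically), and (ii) ‖x_k − x'_k‖ ≤ Ĉ h^p for all k ≥ 0. -/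
open Filter

set_option maxHeartbeats 4000000

/-- Lyapunov quadratic form `γ·(xᵀPx)` for the damped oscillator matrix. -/
noncomputable def Wq (γ a b : ℝ) : ℝ := (γ^2/2 + 1) * a^2 + γ * a * b + b^2

lemma Wq_lb (γ a b : ℝ) : (1/2) * (a^2 + b^2) ≤ Wq γ a b := by
  unfold Wq; nlinarith [sq_nonneg (γ*a + b), sq_nonneg a, sq_nonneg b]

lemma Wq_nonneg (γ a b : ℝ) : 0 ≤ Wq γ a b :=
  le_trans (by positivity) (Wq_lb γ a b)

lemma Wq_ub (γ : ℝ) (hγ : 0 < γ) (a b : ℝ) :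
    Wq γ a b ≤ (γ^2/2 + γ/2 + 1) * (a^2 + b^2) := by
  unfold Wq
  nlinarith [mul_nonneg hγ.le (sq_nonneg (a - b)), mul_nonneg hγ.le (sq_nonneg (a + b)),
    mul_nonneg hγ.le (sq_nonneg a), mul_nonneg hγ.le (sq_nonneg b)]

lemma Wq_smul (γ t a b : ℝ) : Wq γ (t*a) (t*b) = t^2 * Wq γ a b := by
  unfold Wq; ring

lemma Wq_step (γ : ℝ) (hγ : 0 < γ) (h a b : ℝ) (hh : 0 < h)
    (hsmall : h * (γ^2/2 + γ/2 + 1) ≤ γ/2) :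
    Wq γ (a + h*b) (b + h*(-a - γ*b)) ≤ (1 - γ*h/(2*(γ^2/2 + γ/2 + 1))) * Wq γ a b := by
  have hcU0 : (0:ℝ) < γ^2/2 + γ/2 + 1 := by positivity
  have hid : Wq γ (a + h*b) (b + h*(-a - γ*b))
      = Wq γ a b - γ*h*(a^2+b^2) + h^2*(a^2 + γ*a*b + (γ^2/2+1)*b^2) := by
    unfold Wq; ring
  have hQ : a^2 + γ*a*b + (γ^2/2+1)*b^2 ≤ (γ^2/2 + γ/2 + 1) * (a^2 + b^2) := by
    nlinarith [mul_nonneg hγ.le (sq_nonneg (a - b)), mul_nonneg hγ.le (sq_nonneg (a + b)),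
      mul_nonneg hγ.le (sq_nonneg a), mul_nonneg hγ.le (sq_nonneg b), sq_nonneg b]
  have h2 : h^2*(a^2 + γ*a*b + (γ^2/2+1)*b^2) ≤ h * (h * (γ^2/2 + γ/2 + 1)) * (a^2+b^2) := by
    have := mul_le_mul_of_nonneg_left hQ (by positivity : (0:ℝ) ≤ h^2)
    nlinarith [this]
  have h3 : h * (h * (γ^2/2 + γ/2 + 1)) * (a^2+b^2) ≤ h * (γ/2) * (a^2+b^2) := by
    have hab : 0 ≤ a^2 + b^2 := by positivity
    have := mul_le_mul_of_nonneg_left hsmall hh.le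
    nlinarith [mul_le_mul_of_nonneg_right this hab]
  have hWub : Wq γ a b ≤ (γ^2/2 + γ/2 + 1) * (a^2+b^2) := Wq_ub γ hγ a b
  have hkey : (γ*h/(2*(γ^2/2 + γ/2 + 1))) * Wq γ a b ≤ (γ*h/2) * (a^2+b^2) := by
    have hmono : (γ*h/(2*(γ^2/2 + γ/2 + 1))) * Wq γ a b
        ≤ (γ*h/(2*(γ^2/2 + γ/2 + 1))) * ((γ^2/2 + γ/2 + 1) * (a^2+b^2)) :=
      mul_le_mul_of_nonneg_left hWub (by positivity)
    have heq : (γ*h/(2*(γ^2/2 + γ/2 + 1))) * ((γ^2/2 + γ/2 + 1) * (a^2+b^2))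
        = (γ*h/2) * (a^2+b^2) := by
      field_simp
    linarith [hmono, heq ▸ hmono]
  have hmain : Wq γ (a + h*b) (b + h*(-a - γ*b)) ≤ Wq γ a b - (γ*h/2)*(a^2+b^2) := by
    rw [hid]; nlinarith [h2, h3]
  calc Wq γ (a + h*b) (b + h*(-a - γ*b)) ≤ Wq γ a b - (γ*h/2)*(a^2+b^2) := hmain
    _ ≤ Wq γ a b - (γ*h/(2*(γ^2/2 + γ/2 + 1))) * Wq γ a b := by linarith [hkey]
    _ = (1 - γ*h/(2*(γ^2/2 + γ/2 + 1))) * Wq γ a b := by ring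

lemma Wq_subadd (γ δ : ℝ) (hδ : 0 < δ) (u1 u2 v1 v2 : ℝ) :
    Wq γ (u1+v1) (u2+v2) ≤ (1+δ) * Wq γ u1 u2 + (1+1/δ) * Wq γ v1 v2 := by
  have h1 : 0 ≤ Wq γ (δ*u1 - v1) (δ*u2 - v2) := Wq_nonneg _ _ _
  have hs : δ * (1/δ) = 1 := by field_simp
  rw [← mul_le_mul_iff_right₀ hδ]
  have key : δ * ((1+δ) * Wq γ u1 u2 + (1+1/δ) * Wq γ v1 v2)
      - δ * Wq γ (u1+v1) (u2+v2)
      = Wq γ (δ*u1 - v1) (δ*u2 - v2) + (δ*(1/δ) - 1) * Wq γ v1 v2 := by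
    unfold Wq; ring
  rw [hs] at key
  linarith [key, h1]

lemma euclid_norm_sq (v : EuclideanSpace ℝ (Fin 2)) : ‖v‖^2 = (v 0)^2 + (v 1)^2 := by
  rw [EuclideanSpace.norm_eq, Real.sq_sqrt (by positivity)]
  simp [Fin.sum_univ_two]

lemma toEuc_apply0 (γ : ℝ) (v : EuclideanSpace ℝ (Fin 2)) :
    (Matrix.toEuclideanLin (!![0, 1; -1, -γ]) v) 0 = v 1 := by
  simp [Matrix.toEuclideanLin_apply, Matrix.mulVec, dotProduct, Fin.sum_univ_two]

lemma toEuc_apply1 (γ : ℝ) (v : EuclideanSpace ℝ (Fin 2)) :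
    (Matrix.toEuclideanLin (!![0, 1; -1, -γ]) v) 1 = -v 0 - γ * v 1 := by
  simp [Matrix.toEuclideanLin_apply, Matrix.mulVec, dotProduct, Fin.sum_univ_two]
  all_goals ring

/-- **Deterministic core of the theorem in Appendix H.** For the Langevin drift matrix
`A = [[0,1],[−1,−γ]]` with `0 < γ < 2`, there are `h₀ > 0` and `Ĉ > 0` such that for every
step size `h ∈ (0, h₀)` and every perturbation sequence with `‖e_k‖ ≤ C₀ hᵖ`, the iterations
`x_{k+1} = (I + hA)x_k + h e_k` and `x'_k = (I + hA)ᵏ x₀` (same initial condition) satisfy: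
(i) `‖x'_k‖ → 0` geometrically, and (ii) `‖x_k − x'_k‖ ≤ Ĉ hᵖ` for all `k`. -/
theorem ewsg_mean_dynamics_perturbation
    (γ : ℝ) (hγ0 : 0 < γ) (hγ2 : γ < 2) (p : ℕ) (hp : 1 ≤ p) (C₀ : ℝ) (hC₀ : 0 < C₀) :
    ∃ h₀ > 0, ∃ Chat > 0, ∀ h : ℝ, 0 < h → h < h₀ →
      ∀ e x x' : ℕ → EuclideanSpace ℝ (Fin 2),
        (∀ k, ‖e k‖ ≤ C₀ * h ^ p) →
        (∀ k, x (k + 1) =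
          x k + h • (Matrix.toEuclideanLin (!![0, 1; -1, -γ]) (x k)) + h • e k) →
        (∀ k, x' (k + 1) =
          x' k + h • (Matrix.toEuclideanLin (!![0, 1; -1, -γ]) (x' k))) →
        x 0 = x' 0 →
        ((∃ K > 0, ∃ r : ℝ, 0 ≤ r ∧ r < 1 ∧ ∀ k, ‖x' k‖ ≤ K * r ^ k * ‖x' 0‖) ∧
          Tendsto (fun k => ‖x' k‖) atTop (nhds 0) ∧
          ∀ k, ‖x k - x' k‖ ≤ Chat * h ^ p) := by
  obtain ⟨cU, hcU⟩ : ∃ cU : ℝ, cU = γ^2/2 + γ/2 + 1 := ⟨_, rfl⟩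
  have hcU0 : 0 < cU := by rw [hcU]; positivity
  have hcU1 : 1 ≤ cU := by rw [hcU]; nlinarith [sq_nonneg γ]
  refine ⟨min 1 (γ/(2*cU)), by positivity, C₀ * Real.sqrt (80*cU^3) / γ, by positivity,
    fun h hh0 hhlt e x x' he hx hx' hinit => ?_⟩
  have hlt1 : h < 1 := lt_of_lt_of_le hhlt (min_le_left _ _)
  have hltg : h < γ/(2*cU) := lt_of_lt_of_le hhlt (min_le_right _ _)
  have hsmall : h * cU ≤ γ/2 := by
    rw [lt_div_iff₀ (by positivity : (0:ℝ) < 2*cU)] at hltg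
    linarith [hltg]
  have hsmall' : h * (γ^2/2 + γ/2 + 1) ≤ γ/2 := by rw [← hcU]; exact hsmall
  obtain ⟨ρ, hρ⟩ : ∃ ρ : ℝ, ρ = 1 - γ*h/(2*cU) := ⟨_, rfl⟩
  have hγh0 : 0 < γ*h/(2*cU) := by positivity
  have hγh : γ*h/(2*cU) < 1 := by
    rw [div_lt_one (by positivity)]
    have h1 : γ*h < γ*1 := mul_lt_mul_of_pos_left hlt1 hγ0
    rw [mul_one] at h1
    linarith [hcU1, hγ2]
  have hρ0 : 0 < ρ := by rw [hρ]; linarith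
  have hρ1 : ρ < 1 := by rw [hρ]; linarith
  -- component recursions for x'
  have hx'0c : ∀ k, x' (k+1) 0 = x' k 0 + h * (x' k 1) := by
    intro k; rw [hx' k]; simp [toEuc_apply0]
  have hx'1c : ∀ k, x' (k+1) 1 = x' k 1 + h * (-(x' k 0) - γ * (x' k 1)) := by
    intro k; rw [hx' k]; simp [toEuc_apply1]
    all_goals ring
  -- Lyapunov decay for x'
  have hstepρ : ∀ a b : ℝ, Wq γ (a + h*b) (b + h*(-a - γ*b)) ≤ ρ * Wq γ a b := by
    intro a b
    have := Wq_step γ hγ0 h a b hh0 hsmall'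
    rw [hρ, hcU]
    exact this
  have hWdecay : ∀ k, Wq γ (x' k 0) (x' k 1) ≤ ρ^k * Wq γ (x' 0 0) (x' 0 1) := by
    intro k
    induction k with
    | zero => simp
    | succ k ih =>
      have hre : Wq γ (x' (k+1) 0) (x' (k+1) 1)
          = Wq γ (x' k 0 + h * (x' k 1)) (x' k 1 + h*(-(x' k 0) - γ * (x' k 1))) := by
        rw [hx'0c k, hx'1c k]
      calc Wq γ (x' (k+1) 0) (x' (k+1) 1) ≤ ρ * Wq γ (x' k 0) (x' k 1) := by
            rw [hre]; exact hstepρ _ _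
        _ ≤ ρ * (ρ^k * Wq γ (x' 0 0) (x' 0 1)) := mul_le_mul_of_nonneg_left ih hρ0.le
        _ = ρ^(k+1) * Wq γ (x' 0 0) (x' 0 1) := by ring
  -- geometric norm bound
  obtain ⟨K, hK⟩ : ∃ K : ℝ, K = Real.sqrt (2*cU) := ⟨_, rfl⟩
  obtain ⟨r, hr⟩ : ∃ r : ℝ, r = Real.sqrt ρ := ⟨_, rfl⟩
  have hK0 : 0 < K := by rw [hK]; exact Real.sqrt_pos.2 (by positivity)
  have hr0 : 0 ≤ r := by rw [hr]; exact Real.sqrt_nonneg _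
  have hr1 : r < 1 := by
    rw [hr, show (1:ℝ) = Real.sqrt 1 by simp]
    exact Real.sqrt_lt_sqrt hρ0.le (by simpa using hρ1)
  have hKsq : K^2 = 2*cU := by rw [hK]; exact Real.sq_sqrt (by positivity)
  have hrsq : r^2 = ρ := by rw [hr]; exact Real.sq_sqrt hρ0.le
  have hgeo : ∀ k, ‖x' k‖ ≤ K * r^k * ‖x' 0‖ := by
    intro k
    have h1 : ‖x' k‖^2 ≤ 2 * Wq γ (x' k 0) (x' k 1) := by
      rw [euclid_norm_sq]; linarith [Wq_lb γ (x' k 0) (x' k 1)]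
    have h2 : Wq γ (x' 0 0) (x' 0 1) ≤ cU * ‖x' 0‖^2 := by
      rw [euclid_norm_sq, hcU]; exact Wq_ub γ hγ0 _ _
    have h3 : ρ^k * Wq γ (x' 0 0) (x' 0 1) ≤ ρ^k * (cU * ‖x' 0‖^2) :=
      mul_le_mul_of_nonneg_left h2 (by positivity)
    have hrk : (r^k)^2 = ρ^k := by rw [← pow_mul, mul_comm, pow_mul, hrsq]
    have hsq : ‖x' k‖^2 ≤ (K * r^k * ‖x' 0‖)^2 := by
      have hexp : (K * r^k * ‖x' 0‖)^2 = 2*cU * ρ^k * ‖x' 0‖^2 := by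
        rw [mul_pow, mul_pow, hKsq, hrk]
      rw [hexp]
      calc ‖x' k‖^2 ≤ 2 * Wq γ (x' k 0) (x' k 1) := h1
        _ ≤ 2 * (ρ^k * Wq γ (x' 0 0) (x' 0 1)) := by linarith [hWdecay k]
        _ ≤ 2 * (ρ^k * (cU * ‖x' 0‖^2)) := by linarith [h3]
        _ = 2*cU * ρ^k * ‖x' 0‖^2 := by ring
    have hRHS : 0 ≤ K * r^k * ‖x' 0‖ := by positivity
    exact le_of_pow_le_pow_left₀ two_ne_zero hRHS hsq
  refine ⟨⟨K, hK0, r, hr0, hr1, hgeo⟩, ?_, ?_⟩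
  · -- tendsto
    have hgeo' : ∀ k, ‖x' k‖ ≤ (K * ‖x' 0‖) * r^k :=
      fun k => (hgeo k).trans (le_of_eq (by ring))
    have htend : Tendsto (fun k : ℕ => r^k) atTop (nhds 0) :=
      tendsto_pow_atTop_nhds_zero_of_lt_one hr0 hr1
    have h2 := htend.const_mul (K * ‖x' 0‖)
    rw [mul_zero] at h2
    exact squeeze_zero (fun k => norm_nonneg _) hgeo' h2
  · -- perturbation bound
    intro k
    have hx0c : ∀ j, x (j+1) 0 = x j 0 + h * (x j 1) + h * (e j 0) := by
      intro j; rw [hx j]; simp [toEuc_apply0]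
    have hx1c : ∀ j, x (j+1) 1 = x j 1 + h * (-(x j 0) - γ * (x j 1)) + h * (e j 1) := by
      intro j; rw [hx j]; simp [toEuc_apply1]
      all_goals ring
    obtain ⟨Bd, hBd⟩ : ∃ Bd : ℝ, Bd = 40*cU^3*C₀^2*(h^p)^2/γ^2 := ⟨_, rfl⟩
    have hBd0 : 0 ≤ Bd := by rw [hBd]; positivity
    obtain ⟨t, hT⟩ : ∃ t : ℝ, t = γ*h/(4*cU) := ⟨_, rfl⟩
    have ht0 : 0 < t := by rw [hT]; positivity
    have ht1 : t ≤ 1 := by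
      rw [hT, div_le_one (by positivity)]
      have h1 : γ*h < γ*1 := mul_lt_mul_of_pos_left hlt1 hγ0
      rw [mul_one] at h1
      linarith [hcU1, hγ2]
    have hρt : ρ = 1 - 2*t := by rw [hρ, hT]; field_simp; ring
    have hWd : ∀ j, Wq γ (x j 0 - x' j 0) (x j 1 - x' j 1) ≤ Bd := by
      intro j
      induction j with
      | zero =>
        rw [hinit]
        simp only [sub_self]
        rw [show Wq γ 0 0 = 0 by unfold Wq; ring]
        exact hBd0
      | succ j ih =>
        have hd0 : x (j+1) 0 - x' (j+1) 0
            = ((x j 0 - x' j 0) + h*(x j 1 - x' j 1)) + h*(e j 0) := by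
          rw [hx0c j, hx'0c j]; ring
        have hd1 : x (j+1) 1 - x' (j+1) 1
            = ((x j 1 - x' j 1) + h*(-(x j 0 - x' j 0) - γ*(x j 1 - x' j 1))) + h*(e j 1) := by
          rw [hx1c j, hx'1c j]; ring
        rw [hd0, hd1]
        have hsub := Wq_subadd γ t ht0
          ((x j 0 - x' j 0) + h*(x j 1 - x' j 1))
          ((x j 1 - x' j 1) + h*(-(x j 0 - x' j 0) - γ*(x j 1 - x' j 1)))
          (h*(e j 0)) (h*(e j 1))
        have hM : Wq γ ((x j 0 - x' j 0) + h*(x j 1 - x' j 1))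
            ((x j 1 - x' j 1) + h*(-(x j 0 - x' j 0) - γ*(x j 1 - x' j 1)))
            ≤ (1 - 2*t) * Wq γ (x j 0 - x' j 0) (x j 1 - x' j 1) := by
          rw [← hρt]; exact hstepρ _ _
        have hWab : 0 ≤ Wq γ (x j 0 - x' j 0) (x j 1 - x' j 1) := Wq_nonneg _ _ _
        have hC1 : (1+t) * Wq γ ((x j 0 - x' j 0) + h*(x j 1 - x' j 1))
            ((x j 1 - x' j 1) + h*(-(x j 0 - x' j 0) - γ*(x j 1 - x' j 1)))
            ≤ (1-t) * Bd := by
          have h1 := mul_le_mul_of_nonneg_left hM (by linarith : (0:ℝ) ≤ 1+t)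
          have h2 : (1+t)*(1-2*t) ≤ 1 - t := by nlinarith [sq_nonneg t]
          have h3 : (1+t)*((1-2*t) * Wq γ (x j 0 - x' j 0) (x j 1 - x' j 1))
              ≤ (1-t) * Wq γ (x j 0 - x' j 0) (x j 1 - x' j 1) := by
            have := mul_le_mul_of_nonneg_right h2 hWab
            linarith [this]
          have h4 : (1-t) * Wq γ (x j 0 - x' j 0) (x j 1 - x' j 1) ≤ (1-t) * Bd :=
            mul_le_mul_of_nonneg_left ih (by linarith)
          linarith
        have hesq : (e j 0)^2 + (e j 1)^2 ≤ (C₀ * h^p)^2 := by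
          rw [← euclid_norm_sq]
          exact pow_le_pow_left₀ (norm_nonneg _) (he j) 2
        have hWe : Wq γ (h*(e j 0)) (h*(e j 1)) ≤ h^2 * cU * (C₀*h^p)^2 := by
          rw [Wq_smul]
          have h1 : Wq γ (e j 0) (e j 1) ≤ cU * ((e j 0)^2 + (e j 1)^2) := by
            rw [hcU]; exact Wq_ub γ hγ0 _ _
          have h2 : cU * ((e j 0)^2 + (e j 1)^2) ≤ cU * (C₀*h^p)^2 :=
            mul_le_mul_of_nonneg_left hesq hcU0.le
          have := mul_le_mul_of_nonneg_left (h1.trans h2) (sq_nonneg h)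
          linarith [this]
        have h1t : 1 + 1/t ≤ 2/t := by
          have hh : 1 ≤ 1/t := by rw [le_div_iff₀ ht0]; linarith
          have h2t : 2/t = 1/t + 1/t := by ring
          linarith
        have hC2 : (1+1/t) * Wq γ (h*(e j 0)) (h*(e j 1)) ≤ (2/t) * (h^2 * cU * (C₀*h^p)^2) :=
          mul_le_mul h1t hWe (Wq_nonneg _ _ _) (by positivity)
        have hC2' : (2/t) * (h^2 * cU * (C₀*h^p)^2) = 8*h*cU^2*C₀^2*(h^p)^2/γ := by
          rw [hT]; field_simp; ring
        have htB : t * Bd = 10*h*cU^2*C₀^2*(h^p)^2/γ := by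
          rw [hT, hBd]; field_simp; ring
        have hfin : 8*h*cU^2*C₀^2*(h^p)^2/γ ≤ t * Bd := by
          rw [htB, div_le_div_iff₀ hγ0 hγ0]
          have hX : 0 ≤ h*cU^2*C₀^2*(h^p)^2*γ := by positivity
          linarith [hX]
        calc Wq γ (((x j 0 - x' j 0) + h*(x j 1 - x' j 1)) + h*(e j 0))
              (((x j 1 - x' j 1) + h*(-(x j 0 - x' j 0) - γ*(x j 1 - x' j 1))) + h*(e j 1))
            ≤ (1+t) * Wq γ ((x j 0 - x' j 0) + h*(x j 1 - x' j 1))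
                ((x j 1 - x' j 1) + h*(-(x j 0 - x' j 0) - γ*(x j 1 - x' j 1)))
              + (1+1/t) * Wq γ (h*(e j 0)) (h*(e j 1)) := hsub
          _ ≤ (1-t) * Bd + 8*h*cU^2*C₀^2*(h^p)^2/γ := by
              rw [← hC2']; linarith [hC1, hC2]
          _ ≤ (1-t) * Bd + t * Bd := by linarith [hfin]
          _ = Bd := by ring
    -- conclude the norm bound
    have hCsq : (C₀ * Real.sqrt (80*cU^3) / γ * h^p)^2 = 2 * Bd := by
      rw [hBd, mul_pow, div_pow, mul_pow, Real.sq_sqrt (by positivity : (0:ℝ) ≤ 80*cU^3)]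
      field_simp
      ring
    have hdsq : ‖x k - x' k‖^2 ≤ (C₀ * Real.sqrt (80*cU^3) / γ * h^p)^2 := by
      rw [hCsq, euclid_norm_sq]
      have hc0 : (x k - x' k) 0 = x k 0 - x' k 0 := by simp
      have hc1 : (x k - x' k) 1 = x k 1 - x' k 1 := by simp
      rw [hc0, hc1]
      have := Wq_lb γ (x k 0 - x' k 0) (x k 1 - x' k 1)
      linarith [hWd k]
    have hRHS0 : 0 ≤ C₀ * Real.sqrt (80*cU^3) / γ * h^p := by positivity
    exact le_of_pow_le_pow_left₀ two_ne_zero hRHS0 hdsq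
end
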